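/- Let F : ℝⁿ × ℝᵐ → ℝ be twice continuously differentiable with the full Hessian ∇²F(x,z) invertible for every (x,z). Fix c₁, c₂ > 0, p₁ > 2, 1 < p₂ < 2, α₁ = 2 − (p₁−2)/(p₁−1), α₂ = 2 − (p₂−2)/(p₂−1), and write v(x,z) = ∇F(x,z). Then every trajectory of the flow (ẋ, ż) = −(∇²F(x,z))⁻¹ (c₁ v/‖v‖^{(p₁−2)/(p₁−1)} + c₂ v/‖v‖^{(p₂−2)/(p₂−1)}) (right-hand side 0 when v = 0) satisfies ∇F(x(t), z(t)) = 0 for all t ≥ T_SP := 2^{1−α₁/2}/(c₁(2−α₁)) + 2^{1−α₂/2}/(c₂(α₂−2)), for every initial condition; i.e. the trajectory reaches the set of critical points of F in fixed time. -/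

import Mathlib

open scoped RealInnerProductSpace Classical

set_option synthInstance.maxHeartbeats 400000
set_option maxHeartbeats 4000000

private lemma mvt_upper {f f' : ℝ → ℝ} {a b K : ℝ} (hab : a ≤ b)
    (hd : ∀ s ∈ Set.Icc a b, HasDerivAt f (f' s) s)
    (hK : ∀ s ∈ Set.Icc a b, f' s ≤ K) :
    f b - f a ≤ K * (b - a) := by
  have h1 : MonotoneOn (fun t => K * t - f t) (Set.Icc a b) := by
    apply monotoneOn_of_deriv_nonneg (convex_Icc a b)
    · exact ((continuous_const.mul continuous_id).continuousOn).sub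
        (fun s hs => (hd s hs).continuousAt.continuousWithinAt)
    · intro s hs
      have hs' : s ∈ Set.Icc a b := interior_subset hs
      exact (((hasDerivAt_id s).const_mul K).sub (hd s hs')).differentiableAt.differentiableWithinAt
    · intro s hs
      have hs' : s ∈ Set.Icc a b := interior_subset hs
      have hder : HasDerivAt (fun t => K * t - f t) (K * 1 - f' s) s :=
        ((hasDerivAt_id s).const_mul K).sub (hd s hs')
      rw [hder.deriv]
      have := hK s hs'
      linarith
  have h2 := h1 (Set.left_mem_Icc.2 hab) (Set.right_mem_Icc.2 hab) hab
  simp only at h2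
  nlinarith

/-- Fixed-time convergence of the modified Newton saddle-point dynamics to the critical set:
if `F(x,z)` is twice continuously differentiable with invertible Hessian everywhere, then
every trajectory of
`(ẋ, ż) = −(∇²F)⁻¹(c₁ v/‖v‖^{(p₁−2)/(p₁−1)} + c₂ v/‖v‖^{(p₂−2)/(p₂−1)})`, `v = ∇F`,
satisfies `∇F(x(t), z(t)) = 0` for all `t ≥ T_SP`, where
`T_SP = 2^{1−α₁/2}/(c₁(2−α₁)) + 2^{1−α₂/2}/(c₂(α₂−2))`. -/
theorem fixed_time_saddle_point_dynamics_critical_set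
    {n m : ℕ} (c₁ c₂ p₁ p₂ : ℝ) (hc₁ : 0 < c₁) (hc₂ : 0 < c₂)
    (hp₁ : 2 < p₁) (hp₂ : 1 < p₂) (hp₂' : p₂ < 2)
    (α₁ α₂ : ℝ) (hα₁ : α₁ = 2 - (p₁ - 2) / (p₁ - 1)) (hα₂ : α₂ = 2 - (p₂ - 2) / (p₂ - 1))
    (F : WithLp 2 (EuclideanSpace ℝ (Fin n) × EuclideanSpace ℝ (Fin m)) → ℝ)
    (hF : ContDiff ℝ 2 F)
    (hinv : ∀ y : WithLp 2 (EuclideanSpace ℝ (Fin n) × EuclideanSpace ℝ (Fin m)),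
      IsUnit (fderiv ℝ (gradient F) y))
    (y : ℝ → WithLp 2 (EuclideanSpace ℝ (Fin n) × EuclideanSpace ℝ (Fin m)))
    (hy : ∀ t : ℝ, 0 ≤ t → HasDerivAt y
      (if gradient F (y t) = 0 then 0
       else -(Ring.inverse (fderiv ℝ (gradient F) (y t))
          ((c₁ / ‖gradient F (y t)‖ ^ ((p₁ - 2) / (p₁ - 1))) • gradient F (y t)
            + (c₂ / ‖gradient F (y t)‖ ^ ((p₂ - 2) / (p₂ - 1))) • gradient F (y t)))) t) :
    ∀ t : ℝ,
      2 ^ (1 - α₁ / 2) / (c₁ * (2 - α₁)) + 2 ^ (1 - α₂ / 2) / (c₂ * (α₂ - 2)) ≤ t →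
      gradient F (y t) = 0 := by
  -- basic facts about the exponents
  have hq₁ : (p₁ - 2) / (p₁ - 1) = 2 - α₁ := by rw [hα₁]; ring
  have hq₂ : (p₂ - 2) / (p₂ - 1) = 2 - α₂ := by rw [hα₂]; ring
  have hα₁1 : 1 < α₁ := by
    have h1 : (0:ℝ) < p₁ - 1 := by linarith
    have : (p₁ - 2) / (p₁ - 1) < 1 := (div_lt_one h1).2 (by linarith)
    rw [hα₁]; linarith
  have hα₁2 : α₁ < 2 := by
    rw [hα₁]
    have h1 : (0:ℝ) < p₁ - 1 := by linarith
    have : 0 < (p₁ - 2) / (p₁ - 1) := div_pos (by linarith) h1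
    linarith
  have hα₂2 : 2 < α₂ := by
    rw [hα₂]
    have h1 : (0:ℝ) < p₂ - 1 := by linarith
    have : (p₂ - 2) / (p₂ - 1) < 0 := div_neg_of_neg_of_pos (by linarith) h1
    linarith
  set v : ℝ → WithLp 2 (EuclideanSpace ℝ (Fin n) × EuclideanSpace ℝ (Fin m)) := fun s => gradient F (y s) with hvdef
  set h : ℝ → ℝ := fun s => ⟪v s, v s⟫ with hhdef
  have hgradcd : ContDiff ℝ 1 (gradient F) := by
    have h1 : ContDiff ℝ 1 (fderiv ℝ F) := hF.fderiv_right (by norm_num)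
    have h2 : gradient F = fun x =>
        (InnerProductSpace.toDual ℝ _).symm (fderiv ℝ F x) := rfl
    rw [h2]
    exact (InnerProductSpace.toDual ℝ _).symm.contDiff.comp h1
  have hgradd : Differentiable ℝ (gradient F) := hgradcd.differentiable one_ne_zero
  have hnn : ∀ s, 0 ≤ h s := fun s => real_inner_self_nonneg
  -- the key derivative formula
  have key : ∀ s, 0 ≤ s →
      HasDerivAt h (-2 * (c₁ * h s ^ (α₁/2) + c₂ * h s ^ (α₂/2))) s := by
    intro s hs
    have hA : HasFDerivAt (gradient F) (fderiv ℝ (gradient F) (y s)) (y s) :=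
      (hgradd (y s)).hasFDerivAt
    by_cases hz : v s = 0
    · -- derivative is zero
      have hy' := hy s hs
      rw [if_pos hz] at hy'
      have hvd := hA.comp_hasDerivAt s hy'
      simp only [map_zero] at hvd
      have hd : HasDerivAt h (⟪v s, 0⟫ + ⟪0, v s⟫) s := hvd.inner ℝ hvd
      have hval : h s = 0 := by simp [hhdef, hz]
      have : (-2 * (c₁ * h s ^ (α₁/2) + c₂ * h s ^ (α₂/2))) = ⟪v s, (0:WithLp 2 (EuclideanSpace ℝ (Fin n) × EuclideanSpace ℝ (Fin m)))⟫ + ⟪(0:WithLp 2 (EuclideanSpace ℝ (Fin n) × EuclideanSpace ℝ (Fin m))), v s⟫ := by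
        rw [hval, Real.zero_rpow (by positivity : α₁/2 ≠ 0), Real.zero_rpow (by positivity : α₂/2 ≠ 0)]
        simp
      rw [this]
      exact hd
    · set g : ℝ := ‖v s‖ with hgdef
      have hg : 0 < g := norm_pos_iff.2 hz
      set w := (c₁ / g ^ (2 - α₁)) • v s + (c₂ / g ^ (2 - α₂)) • v s with hwdef
      have hy' := hy s hs
      rw [if_neg hz, hq₁, hq₂] at hy'
      have hvd := hA.comp_hasDerivAt s hy'
      have hcancel : (fderiv ℝ (gradient F) (y s)) (-(Ring.inverse (fderiv ℝ (gradient F) (y s)) w)) = -w := by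
        rw [map_neg]
        have := Ring.mul_inverse_cancel _ (hinv (y s))
        have h2 : (fderiv ℝ (gradient F) (y s) * Ring.inverse (fderiv ℝ (gradient F) (y s))) w
            = (1 : _ →L[ℝ] _) w := by rw [this]
        simpa [ContinuousLinearMap.mul_apply] using congrArg Neg.neg h2
      rw [hcancel] at hvd
      have hd : HasDerivAt h (⟪v s, -w⟫ + ⟪-w, v s⟫) s := hvd.inner ℝ hvd
      have hval : ⟪v s, -w⟫ + ⟪-w, v s⟫ = -2 * (c₁ * h s ^ (α₁/2) + c₂ * h s ^ (α₂/2)) := by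
        have hinner : ⟪v s, v s⟫ = g ^ (2:ℝ) := by
          rw [real_inner_self_eq_norm_sq, ← hgdef]
          rw [← Real.rpow_natCast g 2]; norm_num
        have hh : h s = g ^ (2:ℝ) := hinner
        have hsymm : ⟪-w, v s⟫ = ⟪v s, -w⟫ := real_inner_comm _ _
        rw [hsymm]
        rw [inner_neg_right]
        rw [hwdef, inner_add_right, real_inner_smul_right, real_inner_smul_right, hinner]
        have e1 : h s ^ (α₁/2) = g ^ α₁ := by
          rw [hh, ← Real.rpow_mul hg.le]
          congr 1; ring
        have e2 : h s ^ (α₂/2) = g ^ α₂ := by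
          rw [hh, ← Real.rpow_mul hg.le]
          congr 1; ring
        rw [e1, e2]
        have f1 : c₁ / g ^ (2 - α₁) * g ^ (2:ℝ) = c₁ * g ^ α₁ := by
          rw [div_mul_eq_mul_div, mul_div_assoc, ← Real.rpow_sub hg]
          norm_num
        have f2 : c₂ / g ^ (2 - α₂) * g ^ (2:ℝ) = c₂ * g ^ α₂ := by
          rw [div_mul_eq_mul_div, mul_div_assoc, ← Real.rpow_sub hg]
          norm_num
        rw [f1, f2]; ring
      rw [← hval]
      exact hd
  -- comparison argument
  intro t ht
  by_contra hne
  have hne' : v t ≠ 0 := hne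
  have hht : 0 < h t := by
    have he : h t = ‖v t‖ ^ 2 := real_inner_self_eq_norm_sq _
    rw [he]
    exact pow_pos (norm_pos_iff.2 hne') 2
  have ha₁ : 0 < c₁ * (2 - α₁) := by nlinarith
  have ha₂ : 0 < c₂ * (α₂ - 2) := by nlinarith
  set T₁ := (2:ℝ) ^ (1 - α₁/2) / (c₁ * (2 - α₁)) with hT₁
  set T₂ := (2:ℝ) ^ (1 - α₂/2) / (c₂ * (α₂ - 2)) with hT₂
  have h2pos : (0:ℝ) < 2 := two_pos
  have hT₁pos : 0 < T₁ := div_pos (Real.rpow_pos_of_pos h2pos _) ha₁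
  have hT₂pos : 0 < T₂ := div_pos (Real.rpow_pos_of_pos h2pos _) ha₂
  have htpos : (0:ℝ) ≤ t := le_trans (by positivity) ht
  set f' : ℝ → ℝ := fun u => -2 * (c₁ * h u ^ (α₁/2) + c₂ * h u ^ (α₂/2)) with hf'
  have hf'le : ∀ u, f' u ≤ 0 := by
    intro u
    have h1 : 0 ≤ h u ^ (α₁/2) := Real.rpow_nonneg (hnn u) _
    have h2 : 0 ≤ h u ^ (α₂/2) := Real.rpow_nonneg (hnn u) _
    simp only [hf']
    nlinarith
  have hmono : ∀ s ∈ Set.Icc (0:ℝ) t, h t ≤ h s := by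
    intro s hsmem
    have := mvt_upper (f := h) (f' := f') (K := 0) hsmem.2
      (fun u hu => key u (le_trans hsmem.1 hu.1))
      (fun u _ => hf'le u)
    nlinarith
  have hpos : ∀ s ∈ Set.Icc (0:ℝ) t, 0 < h s := fun s hs => lt_of_lt_of_le hht (hmono s hs)
  -- Phase 1 : h drops below 2 by time T₂
  set β : ℝ := 1 - α₂/2 with hβ
  have hβneg : β < 0 := by rw [hβ]; linarith
  set ψ : ℝ → ℝ := fun s => h s ^ β with hψ
  have hT₂t : T₂ ≤ t := by linarith
  have hψd : ∀ s ∈ Set.Icc (0:ℝ) T₂, HasDerivAt ψ (f' s * β * h s ^ (β - 1)) s := by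
    intro s hsmem
    exact (key s hsmem.1).rpow_const
      (Or.inl (ne_of_gt (hpos s ⟨hsmem.1, le_trans hsmem.2 hT₂t⟩)))
  have hψd' : ∀ s ∈ Set.Icc (0:ℝ) T₂, c₂ * (α₂ - 2) ≤ f' s * β * h s ^ (β - 1) := by
    intro s hsmem
    have hH : 0 < h s := hpos s ⟨hsmem.1, le_trans hsmem.2 hT₂t⟩
    have e0 : h s ^ (α₂/2) * h s ^ (β - 1) = 1 := by
      rw [← Real.rpow_add hH]
      rw [show α₂/2 + (β - 1) = 0 by rw [hβ]; ring, Real.rpow_zero]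
    have e1 : 0 ≤ h s ^ (α₁/2) * h s ^ (β - 1) :=
      mul_nonneg (Real.rpow_nonneg hH.le _) (Real.rpow_nonneg hH.le _)
    have expand : f' s * β * h s ^ (β - 1)
        = (α₂ - 2) * c₁ * (h s ^ (α₁/2) * h s ^ (β - 1)) + (α₂ - 2) * c₂ := by
      simp only [hf']
      rw [hβ]
      linear_combination ((α₂ - 2) * c₂) * e0
    rw [expand]
    have hnn2 : 0 ≤ (α₂ - 2) * c₁ * (h s ^ (α₁/2) * h s ^ (β - 1)) :=
      mul_nonneg (mul_nonneg (by linarith) hc₁.le) e1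
    nlinarith
  have hmvt1 := mvt_upper (f := fun s => -ψ s) (f' := fun s => -(f' s * β * h s ^ (β - 1)))
    (K := -(c₂ * (α₂ - 2))) hT₂pos.le
    (fun u hu => (hψd u hu).neg)
    (fun u hu => by simpa using neg_le_neg (hψd' u hu))
  have hprod : c₂ * (α₂ - 2) * T₂ = (2:ℝ) ^ β := by
    rw [hT₂, hβ]
    field_simp
    exact div_self (by linarith)
  have hψ0 : 0 < ψ 0 := Real.rpow_pos_of_pos (hpos 0 ⟨le_refl _, htpos⟩) _
  have hψT₂ : (2:ℝ) ^ β < ψ T₂ := by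
    have hmvt1' : -ψ T₂ - -ψ 0 ≤ -(c₂ * (α₂ - 2)) * (T₂ - 0) := hmvt1
    nlinarith
  have hlt2 : h T₂ < 2 := by
    by_contra hge
    push_neg at hge
    have : ψ T₂ ≤ (2:ℝ) ^ β := Real.rpow_le_rpow_of_nonpos h2pos hge hβneg.le
    linarith
  -- Phase 2 : h reaches 0 by time T₁ + T₂
  set γ : ℝ := 1 - α₁/2 with hγ
  have hγpos : 0 < γ := by rw [hγ]; linarith
  set φ : ℝ → ℝ := fun s => h s ^ γ with hφ
  have hφd : ∀ s ∈ Set.Icc T₂ t, HasDerivAt φ (f' s * γ * h s ^ (γ - 1)) s := by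
    intro s hsmem
    exact (key s (le_trans hT₂pos.le hsmem.1)).rpow_const
      (Or.inl (ne_of_gt (hpos s ⟨le_trans hT₂pos.le hsmem.1, hsmem.2⟩)))
  have hφd' : ∀ s ∈ Set.Icc T₂ t, f' s * γ * h s ^ (γ - 1) ≤ -(c₁ * (2 - α₁)) := by
    intro s hsmem
    have hH : 0 < h s := hpos s ⟨le_trans hT₂pos.le hsmem.1, hsmem.2⟩
    have e0 : h s ^ (α₁/2) * h s ^ (γ - 1) = 1 := by
      rw [← Real.rpow_add hH]
      rw [show α₁/2 + (γ - 1) = 0 by rw [hγ]; ring, Real.rpow_zero]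
    have e1 : 0 ≤ h s ^ (α₂/2) * h s ^ (γ - 1) :=
      mul_nonneg (Real.rpow_nonneg hH.le _) (Real.rpow_nonneg hH.le _)
    have expand : f' s * γ * h s ^ (γ - 1)
        = (α₁ - 2) * c₁ + (α₁ - 2) * c₂ * (h s ^ (α₂/2) * h s ^ (γ - 1)) := by
      simp only [hf']
      rw [hγ]
      linear_combination ((α₁ - 2) * c₁) * e0
    rw [expand]
    have hnp : (α₁ - 2) * c₂ * (h s ^ (α₂/2) * h s ^ (γ - 1)) ≤ 0 :=
      mul_nonpos_of_nonpos_of_nonneg (mul_nonpos_of_nonpos_of_nonneg (by linarith) hc₂.le) e1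
    nlinarith
  have hmvt2 := mvt_upper (f := φ) (f' := fun s => f' s * γ * h s ^ (γ - 1))
    (K := -(c₁ * (2 - α₁))) hT₂t hφd hφd'
  have hφT₂ : φ T₂ < (2:ℝ) ^ γ :=
    Real.rpow_lt_rpow (hpos T₂ ⟨hT₂pos.le, hT₂t⟩).le hlt2 hγpos
  have hφt : 0 < φ t := Real.rpow_pos_of_pos (hpos t ⟨htpos, le_refl _⟩) _
  have hprod2 : c₁ * (2 - α₁) * T₁ = (2:ℝ) ^ γ := by
    rw [hT₁, hγ]
    field_simp
    exact div_self (by linarith)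
  have htT : T₁ ≤ t - T₂ := by linarith
  nlinarith [mul_le_mul_of_nonneg_left htT ha₁.le]
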